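/- Every Perron number λ of algebraic degree 2 over ℚ is the spectral radius of a 2 × 2 nonnegative integral aperiodic matrix; hence the Perron–Frobenius degree of every quadratic Perron number equals 2. -/

import Mathlib

open Polynomial

/-- The spectral radius of an integer matrix: the supremum of the moduli of the
complex roots of its characteristic polynomial. -/
noncomputable def specRad {n : ℕ} (A : Matrix (Fin n) (Fin n) ℤ) : ℝ :=
  sSup {r : ℝ | ∃ μ : ℂ, (A.map (Int.cast : ℤ → ℂ)).charpoly.IsRoot μ ∧ r = ‖μ‖}

/-- A nonnegative integral matrix is aperiodic if some positive power has all
entries strictly positive. -/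
def IsAperiodic {n : ℕ} (A : Matrix (Fin n) (Fin n) ℤ) : Prop :=
  ∃ k : ℕ, 0 < k ∧ ∀ i j, 0 < (A ^ k) i j

/-- A Perron number: a real algebraic integer `p ≥ 1` strictly greater than the
absolute value of each of its other Galois conjugates. -/
def IsPerron (p : ℝ) : Prop :=
  1 ≤ p ∧ IsIntegral ℤ p ∧
    ∀ z : ℂ, (Polynomial.aeval z) (minpoly ℚ p) = 0 → z ≠ (p : ℂ) → ‖z‖ < p

/-- The Perron–Frobenius degree: the smallest size of a nonnegative integral
aperiodic matrix with the given spectral radius. -/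
noncomputable def dPF (p : ℝ) : ℕ :=
  sInf {n : ℕ | ∃ A : Matrix (Fin n) (Fin n) ℤ,
    (∀ i j, 0 ≤ A i j) ∧ IsAperiodic A ∧ specRad A = p}

lemma myCharpolyFinTwo {R : Type*} [CommRing R] (M : Matrix (Fin 2) (Fin 2) R) :
    M.charpoly = X ^ 2 - C M.trace * X + C M.det := by
  rw [Matrix.charpoly, Matrix.det_fin_two, Matrix.trace_fin_two, Matrix.det_fin_two]
  rw [Matrix.charmatrix_apply_eq, Matrix.charmatrix_apply_eq,
    Matrix.charmatrix_apply_ne _ _ _ (by decide), Matrix.charmatrix_apply_ne _ _ _ (by decide)]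
  simp only [map_add, map_sub, map_mul]
  ring

lemma myCharpolyFinOne {R : Type*} [CommRing R] (M : Matrix (Fin 1) (Fin 1) R) :
    M.charpoly = X - C (M 0 0) := by
  rw [Matrix.charpoly, Matrix.det_fin_one, Matrix.charmatrix_apply_eq]

lemma myCharpolyFinZero {R : Type*} [CommRing R] (M : Matrix (Fin 0) (Fin 0) R) :
    M.charpoly = 1 := by
  rw [Matrix.charpoly, Matrix.det_isEmpty]

lemma specRadTwo (A : Matrix (Fin 2) (Fin 2) ℤ) (lam lam' : ℝ)
    (hs : ((A.trace : ℤ) : ℝ) = lam + lam') (hp : ((A.det : ℤ) : ℝ) = lam * lam')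
    (habs : |lam'| < lam) : specRad A = lam := by
  have hlampos : 0 < lam := lt_of_le_of_lt (abs_nonneg _) habs
  have hq : (A.map (Int.cast : ℤ → ℂ)).charpoly
      = (X - C (lam : ℂ)) * (X - C (lam' : ℂ)) := by
    rw [myCharpolyFinTwo]
    have htr : (A.map (Int.cast : ℤ → ℂ)).trace = ((lam : ℂ) + (lam' : ℂ)) := by
      rw [Matrix.trace_fin_two] at hs
      rw [Matrix.trace_fin_two]
      simp only [Matrix.map_apply]
      push_cast at hs ⊢
      exact_mod_cast congrArg (Complex.ofReal) hs
    have hdt : (A.map (Int.cast : ℤ → ℂ)).det = ((lam : ℂ) * (lam' : ℂ)) := by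
      rw [Matrix.det_fin_two] at hp
      rw [Matrix.det_fin_two]
      simp only [Matrix.map_apply]
      push_cast at hp ⊢
      exact_mod_cast congrArg (Complex.ofReal) hp
    rw [htr, hdt]
    rw [map_add, map_mul]
    ring
  have hset : {r : ℝ | ∃ μ : ℂ, (A.map (Int.cast : ℤ → ℂ)).charpoly.IsRoot μ ∧ r = ‖μ‖}
      = {lam, |lam'|} := by
    ext r
    simp only [Set.mem_setOf_eq, Set.mem_insert_iff, Set.mem_singleton_iff, hq, IsRoot.def,
      eval_mul, eval_sub, eval_X, eval_C, mul_eq_zero, sub_eq_zero]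
    constructor
    · rintro ⟨μ, h | h, rfl⟩
      · subst h; left; rw [Complex.norm_real, Real.norm_eq_abs, abs_of_pos hlampos]
      · subst h; right; rw [Complex.norm_real, Real.norm_eq_abs]
    · rintro (h | h)
      · exact ⟨(lam : ℂ), Or.inl rfl, by rw [h, Complex.norm_real, Real.norm_eq_abs, abs_of_pos hlampos]⟩
      · exact ⟨(lam' : ℂ), Or.inr rfl, by rw [h, Complex.norm_real, Real.norm_eq_abs]⟩
  rw [specRad, hset, csSup_pair]
  exact sup_eq_left.mpr habs.le

lemma auxNonneg1 (d t : ℤ) (hd : d < 0) (ht : 1 ≤ t) :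
    ∀ i j, 0 ≤ (!![0, 1; -d, t] : Matrix (Fin 2) (Fin 2) ℤ) i j := by
  intro i j
  fin_cases i <;> fin_cases j <;> simp <;> omega

lemma auxPos1 (d t : ℤ) (hd : d < 0) (ht : 1 ≤ t) :
    ∀ i j, 0 < ((!![0, 1; -d, t] : Matrix (Fin 2) (Fin 2) ℤ) ^ 2) i j := by
  intro i j
  rw [pow_two, Matrix.mul_fin_two]
  fin_cases i <;> fin_cases j <;> simp <;> nlinarith

lemma auxNonneg2 (a b e : ℤ) (ha : 1 ≤ a) (hb : 1 ≤ b) (he : 1 ≤ e) :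
    ∀ i j, 0 ≤ (!![a, b; 1, e] : Matrix (Fin 2) (Fin 2) ℤ) i j := by
  intro i j
  fin_cases i <;> fin_cases j <;> simp <;> omega

lemma auxPos2 (a b e : ℤ) (ha : 1 ≤ a) (hb : 1 ≤ b) (he : 1 ≤ e) :
    ∀ i j, 0 < ((!![a, b; 1, e] : Matrix (Fin 2) (Fin 2) ℤ) ^ 2) i j := by
  intro i j
  rw [pow_two, Matrix.mul_fin_two]
  fin_cases i <;> fin_cases j <;> simp <;> nlinarith

theorem quadratic_perron_PF_degree_two (lam : ℝ) (hlam : IsPerron lam)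
    (hdeg : (minpoly ℚ lam).natDegree = 2) :
    (∃ A : Matrix (Fin 2) (Fin 2) ℤ,
      (∀ i j, 0 ≤ A i j) ∧ IsAperiodic A ∧ specRad A = lam) ∧
    dPF lam = 2 := by
  obtain ⟨hge1, hint, hconj⟩ := hlam
  set p := minpoly ℤ lam with hpdef
  have hpmap : minpoly ℚ lam = p.map (algebraMap ℤ ℚ) :=
    minpoly.isIntegrallyClosed_eq_field_fractions' ℚ hint
  have hmonic : p.Monic := minpoly.monic hint
  have hpdeg : p.natDegree = 2 := by
    rwa [hpmap, hmonic.natDegree_map] at hdeg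
  set t : ℤ := -(p.coeff 1) with htdef
  set d : ℤ := p.coeff 0 with hddef
  have h2 : p.coeff 2 = 1 := by
    have := hmonic.coeff_natDegree
    rwa [hpdeg] at this
  have hpform : p = X ^ 2 - C t * X + C d := by
    rw [p.as_sum_range' 3 (by omega)]
    simp [Finset.sum_range_succ, h2, htdef, ← Polynomial.C_mul_X_pow_eq_monomial]
    ring
  have hirr : ∀ q : ℚ, (q : ℝ) ≠ lam := by
    intro q hq
    have hq' : (algebraMap ℚ ℝ) q = lam := hq
    have : minpoly ℚ lam = X - C q := by
      rw [← hq']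
      exact minpoly.eq_X_sub_C_of_algebraMap_inj q (algebraMap ℚ ℝ).injective
    rw [this] at hdeg
    simp at hdeg
  have heval : lam ^ 2 - (t : ℝ) * lam + (d : ℝ) = 0 := by
    have h0 := minpoly.aeval ℤ lam
    rw [← hpdef, hpform] at h0
    simpa using h0
  set lam' : ℝ := (t : ℝ) - lam with hlam'def
  have hsum : ((t : ℤ) : ℝ) = lam + lam' := by rw [hlam'def]; ring
  have hprod : ((d : ℤ) : ℝ) = lam * lam' := by rw [hlam'def]; linear_combination heval
  have hne : lam' ≠ lam := by
    intro h
    apply hirr ((t : ℚ) / 2)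
    push_cast
    rw [hlam'def] at h
    linarith
  have habs : |lam'| < lam := by
    have hroot : (Polynomial.aeval (lam' : ℂ)) (minpoly ℚ lam) = 0 := by
      rw [hpmap]
      rw [show ((lam' : ℝ) : ℂ) = algebraMap ℝ ℂ lam' from rfl]
      rw [aeval_map_algebraMap]
      rw [hpform]
      have hval' : lam' ^ 2 - (t : ℝ) * lam' + (d : ℝ) = 0 := by
        rw [hlam'def]; linear_combination heval
      simp only [map_add, map_sub, map_mul, aeval_X_pow, aeval_X, aeval_C]
      have := congrArg (Complex.ofReal) hval'
      push_cast at this ⊢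
      convert this using 2
      · simp
      · simp
    have hnec : ((lam' : ℝ) : ℂ) ≠ ((lam : ℝ) : ℂ) := by
      exact_mod_cast hne
    have := hconj (lam' : ℂ) hroot hnec
    rwa [Complex.norm_real, Real.norm_eq_abs] at this
  have hlampos : 0 < lam := lt_of_lt_of_le zero_lt_one hge1
  have htpos : (0 : ℝ) < (t : ℝ) := by
    rw [hsum]
    have := abs_lt.mp habs
    linarith [this.1]
  have ht1 : 1 ≤ t := by
    have : (0 : ℤ) < t := by exact_mod_cast htpos
    omega
  -- Part 1: construct the matrix
  have part1 : ∃ A : Matrix (Fin 2) (Fin 2) ℤ,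
      (∀ i j, 0 ≤ A i j) ∧ IsAperiodic A ∧ specRad A = lam := by
    by_cases hd : d ≤ 0
    · -- companion matrix, d < 0
      have hdne : d ≠ 0 := by
        intro h0
        have : lam' = 0 := by
          have := hprod
          rw [h0] at this
          push_cast at this
          rcases mul_eq_zero.mp this.symm with h | h
          · linarith
          · exact h
        apply hirr (t : ℚ)
        push_cast
        rw [hlam'def] at this
        linarith
      have hdneg : d < 0 := lt_of_le_of_ne hd hdne
      refine ⟨!![0, 1; -d, t], auxNonneg1 d t hdneg ht1, ⟨2, two_pos, auxPos1 d t hdneg ht1⟩, ?_⟩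
      · apply specRadTwo _ lam lam'
        · have htr : (!![0, 1; -d, t] : Matrix (Fin 2) (Fin 2) ℤ).trace = t := by
            rw [Matrix.trace_fin_two]
            norm_num
          rw [htr]; exact hsum
        · have hdt : (!![0, 1; -d, t] : Matrix (Fin 2) (Fin 2) ℤ).det = d := by
            rw [Matrix.det_fin_two]
            norm_num
          rw [hdt]; exact hprod
        · exact habs
    · push_neg at hd
      have hlam'pos : 0 < lam' := by
        by_contra h
        push_neg at h
        have : (d : ℝ) ≤ 0 := by
          rw [hprod]
          exact mul_nonpos_of_nonneg_of_nonpos hlampos.le h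
        have : d ≤ 0 := by exact_mod_cast this
        omega
      have hlam'lt : lam' < lam := by
        rwa [abs_of_pos hlam'pos] at habs
      -- gap > 1
      have hgap : 1 < lam - lam' := by
        by_contra h
        push_neg at h
        have h2l : 0 < 2 * lam - (t : ℝ) := by rw [hlam'def] at hlam'lt; linarith
        have hsq : (2 * lam - (t : ℝ)) ^ 2 = ((t ^ 2 - 4 * d : ℤ) : ℝ) := by
          push_cast
          linear_combination 4 * heval
        have h2lam : 2 * lam - (t : ℝ) = lam - lam' := by rw [hlam'def]; ring
        have hle1 : ((t ^ 2 - 4 * d : ℤ) : ℝ) ≤ 1 := by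
          rw [← hsq]
          nlinarith
        have hgt0 : (0 : ℝ) < ((t ^ 2 - 4 * d : ℤ) : ℝ) := by
          rw [← hsq]; positivity
        have he1 : (t ^ 2 - 4 * d : ℤ) = 1 := by
          have h1 : (0 : ℤ) < t ^ 2 - 4 * d := by exact_mod_cast hgt0
          have h2' : (t ^ 2 - 4 * d : ℤ) ≤ 1 := by exact_mod_cast hle1
          omega
        have : (2 * lam - (t : ℝ)) ^ 2 = 1 := by rw [hsq, he1]; norm_num
        have h2lt : 2 * lam - (t : ℝ) = 1 := by nlinarith
        apply hirr (((t : ℚ) + 1) / 2)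
        push_cast
        linarith
      set a : ℤ := ⌊lam⌋ with hadef
      have ha1 : 1 ≤ a := by
        rw [hadef]
        exact Int.le_floor.mpr (by exact_mod_cast hge1)
      have haltlam : (a : ℝ) < lam := by
        rcases lt_or_eq_of_le (Int.floor_le lam) with h | h
        · exact h
        · exact absurd (by exact_mod_cast h : ((a : ℚ) : ℝ) = lam) (hirr _)
      have halam' : lam' < (a : ℝ) := by
        have := Int.sub_one_lt_floor lam
        rw [← hadef] at this
        linarith
      set e : ℤ := t - a with hedef
      have hecast : ((e : ℤ) : ℝ) = lam + lam' - a := by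
        rw [hedef]; push_cast; rw [hsum]
      have hepos : (0 : ℝ) < (e : ℝ) := by rw [hecast]; linarith
      have he1 : 1 ≤ e := by
        have : (0 : ℤ) < e := by exact_mod_cast hepos
        omega
      set b : ℤ := a * e - d with hbdef
      have hbreal : ((a * e : ℤ) : ℝ) - (d : ℝ) = (lam - a) * ((a : ℝ) - lam') := by
        push_cast
        rw [hecast, hprod]
        ring
      have hb1 : 1 ≤ b := by
        have hpos : (0 : ℝ) < ((a * e : ℤ) : ℝ) - (d : ℝ) := by
          rw [hbreal]
          exact mul_pos (by linarith) (by linarith)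
        have : d < a * e := by exact_mod_cast sub_pos.mp hpos
        omega
      refine ⟨!![a, b; 1, e], auxNonneg2 a b e ha1 hb1 he1, ⟨2, two_pos, auxPos2 a b e ha1 hb1 he1⟩, ?_⟩
      · apply specRadTwo _ lam lam'
        · have htr : (!![a, b; 1, e] : Matrix (Fin 2) (Fin 2) ℤ).trace = t := by
            rw [Matrix.trace_fin_two]
            show a + e = t
            rw [hedef]; ring
          rw [htr]; exact hsum
        · have hdt : (!![a, b; 1, e] : Matrix (Fin 2) (Fin 2) ℤ).det = d := by
            rw [Matrix.det_fin_two]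
            show a * e - b * 1 = d
            rw [hbdef]; ring
          rw [hdt]; exact hprod
        · exact habs
  refine ⟨part1, ?_⟩
  -- Part 2: dPF = 2
  have h0notin : ¬ (∃ A : Matrix (Fin 0) (Fin 0) ℤ,
      (∀ i j, 0 ≤ A i j) ∧ IsAperiodic A ∧ specRad A = lam) := by
    rintro ⟨A, -, -, hs⟩
    have hempty : {r : ℝ | ∃ μ : ℂ, (A.map (Int.cast : ℤ → ℂ)).charpoly.IsRoot μ
        ∧ r = ‖μ‖} = ∅ := by
      ext r
      simp [myCharpolyFinZero, IsRoot]
    rw [specRad, hempty, Real.sSup_empty] at hs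
    linarith
  have h1notin : ¬ (∃ A : Matrix (Fin 1) (Fin 1) ℤ,
      (∀ i j, 0 ≤ A i j) ∧ IsAperiodic A ∧ specRad A = lam) := by
    rintro ⟨A, -, -, hs⟩
    have hone : {r : ℝ | ∃ μ : ℂ, (A.map (Int.cast : ℤ → ℂ)).charpoly.IsRoot μ
        ∧ r = ‖μ‖} = {((|A 0 0| : ℤ) : ℝ)} := by
      ext r
      simp only [Set.mem_setOf_eq, Set.mem_singleton_iff, myCharpolyFinOne, IsRoot.def,
        eval_sub, eval_X, eval_C, sub_eq_zero, Matrix.map_apply]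
      constructor
      · rintro ⟨μ, h, rfl⟩
        rw [h, Complex.norm_intCast]
        push_cast
        ring
      · rintro h
        exact ⟨((A 0 0 : ℤ) : ℂ), rfl, by rw [Complex.norm_intCast, h]; push_cast; ring⟩
    rw [specRad, hone, csSup_singleton] at hs
    exact hirr ((|A 0 0| : ℤ) : ℚ) (by push_cast; exact_mod_cast hs)
  rw [dPF]
  set S : Set ℕ := {n : ℕ | ∃ A : Matrix (Fin n) (Fin n) ℤ,
    (∀ i j, 0 ≤ A i j) ∧ IsAperiodic A ∧ specRad A = lam} with hSdef
  have h2S : 2 ∈ S := part1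
  apply le_antisymm
  · exact Nat.sInf_le h2S
  · by_contra h
    push_neg at h
    have hmem : sInf S ∈ S := Nat.sInf_mem ⟨2, h2S⟩
    have hle : sInf S ≤ 1 := by omega
    interval_cases hm : (sInf S)
    · exact h0notin hmem
    · exact h1notin hmem
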